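/- Let G be a finite cyclic group and X a finite G-set. Let A = ⊕_{x∈X} Zx be the free abelian group on X with G acting by permuting basis elements. Then the Herbrand quotient h(G, A) = ∏_{x ∈ X/G} #G_x. -/

import Mathlib

variable (G : Type*) [Group G] [Fintype G] (A : Type*) [AddCommGroup A] [DistribMulAction G A]

/-- The norm map `a ↦ ∑_{τ ∈ G} τ • a`. -/
noncomputable def normMap : A →+ A := ∑ τ : G, DistribMulAction.toAddMonoidHom A τ

/-- The map `a ↦ a - σ • a`. -/
def oneSubMap (σ : G) : A →+ A := AddMonoidHom.id A - DistribMulAction.toAddMonoidHom A σ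

/-- The subgroup of `G`-fixed points `A^G`. -/
def fixedSub : AddSubgroup A where
  carrier := {a | ∀ τ : G, τ • a = a}
  zero_mem' := fun τ => smul_zero τ
  add_mem' := fun ha hb τ => by rw [smul_add, ha τ, hb τ]
  neg_mem' := fun ha τ => by rw [smul_neg, ha τ]

/-- `#H¹(G,A)` for `G` cyclic with generator `σ`, computed as `#(ker N_G / (1-σ)A)`. -/
noncomputable def H1card (σ : G) : ℕ :=
  Nat.card ((normMap G A).ker ⧸ ((oneSubMap G A σ).range.addSubgroupOf (normMap G A).ker))

/-- `#Ĥ⁰(G,A) = (A^G : N_G A)`. -/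
noncomputable def H0card : ℕ :=
  Nat.card (fixedSub G A ⧸ ((normMap G A).range.addSubgroupOf (fixedSub G A)))

/-- The Herbrand quotient `h(G,A) = #Ĥ⁰(G,A) / #H¹(G,A)`. -/
noncomputable def herbrand (σ : G) : ℚ := (H0card G A : ℚ) / (H1card G A σ : ℚ)

attribute [local instance] Finsupp.comapSMul Finsupp.comapMulAction Finsupp.comapDistribMulAction

set_option linter.unusedSectionVars false
set_option maxHeartbeats 1000000

open Finset MulAction

section Aux
variable {G : Type*} [Group G] [Fintype G] {X : Type*} [Finite X] [MulAction G X]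

lemma normMap_apply (f : X →₀ ℤ) (y : X) :
    normMap G (X →₀ ℤ) f y = ∑ τ : G, f (τ • y) := by
  rw [normMap, AddMonoidHom.finset_sum_apply]
  rw [show ((∑ τ : G, DistribMulAction.toAddMonoidHom (X →₀ ℤ) τ f) : X →₀ ℤ)
      = ∑ τ : G, τ • f from rfl]
  rw [Finset.sum_apply']
  rw [← Equiv.sum_comp (Equiv.inv G) (fun τ : G => (τ • f) y)]
  refine Finset.sum_congr rfl fun τ _ => ?_
  simp [Finsupp.comapSMul_apply]

variable (G) in
noncomputable def orbitFinset (r : X) : Finset X := by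
  classical
  exact Finset.univ.image (fun τ : G => τ • r)

lemma mem_orbitFinset {r x : X} : x ∈ orbitFinset G r ↔ x ∈ MulAction.orbit G r := by
  classical
  simp [orbitFinset, MulAction.mem_orbit_iff, eq_comm]

lemma card_fiber (r x : X) (hx : x ∈ MulAction.orbit G r) [DecidableEq X] :
    (Finset.univ.filter (fun τ : G => τ • r = x)).card
      = Nat.card (MulAction.stabilizer G r) := by
  classical
  obtain ⟨τ₀, hτ₀⟩ := hx
  simp only at hτ₀
  rw [Nat.card_eq_fintype_card, Fintype.card_subtype]
  refine Finset.card_nbij' (fun τ => τ₀⁻¹ * τ) (fun s => τ₀ * s) ?_ ?_ ?_ ?_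
  · intro τ hτ
    simp only [mem_coe, mem_filter, mem_univ, true_and] at hτ ⊢
    rw [MulAction.mem_stabilizer_iff, mul_smul, hτ, ← hτ₀]
    simp
  · intro s hs
    simp only [mem_coe, mem_filter, mem_univ, true_and] at hs ⊢
    rw [mul_smul, hs, hτ₀]
  · intro τ _; simp
  · intro s _; simp

lemma sum_smul_eq (r : X) (v : X → ℤ) :
    ∑ τ : G, v (τ • r)
      = (Nat.card (MulAction.stabilizer G r)) • ∑ x ∈ orbitFinset G r, v x := by
  classical
  rw [← Finset.sum_fiberwise_of_maps_to (g := fun τ : G => τ • r) (t := orbitFinset G r)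
      (fun τ _ => by rw [mem_orbitFinset]; exact MulAction.mem_orbit r τ) (fun τ => v (τ • r))]
  rw [Finset.smul_sum]
  refine Finset.sum_congr rfl fun x hx => ?_
  rw [mem_orbitFinset] at hx
  have h : ∀ τ ∈ Finset.univ.filter (fun τ : G => τ • r = x), v (τ • r) = v x := by
    intro τ hτ
    simp only [mem_filter] at hτ
    rw [hτ.2]
  rw [Finset.sum_congr rfl h, Finset.sum_const, card_fiber r x hx]

lemma orbit_sum_zero {f : X →₀ ℤ} (hf : normMap G (X →₀ ℤ) f = 0) (r : X) :
    ∑ x ∈ orbitFinset G r, f x = 0 := by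
  have h0 : normMap G (X →₀ ℤ) f r = 0 := by rw [hf]; rfl
  rw [normMap_apply, sum_smul_eq r (fun x => f x)] at h0
  have hp : 0 < Nat.card (MulAction.stabilizer G r) := Nat.card_pos
  rw [nsmul_eq_mul] at h0
  rcases mul_eq_zero.mp h0 with h | h
  · exact absurd h (by exact_mod_cast hp.ne')
  · exact h

lemma oneSubMap_single (σ : G) (y : X) (c : ℤ) :
    oneSubMap G (X →₀ ℤ) σ (Finsupp.single y c)
      = Finsupp.single y c - Finsupp.single (σ • y) c := by
  simp [oneSubMap, Finsupp.comapSMul_single]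

lemma single_sub_single_pow_mem (σ : G) (x : X) (c : ℤ) (k : ℕ) :
    Finsupp.single x c - Finsupp.single (σ ^ k • x) c
      ∈ (oneSubMap G (X →₀ ℤ) σ).range := by
  induction k with
  | zero =>
      simp only [pow_zero, one_smul, sub_self]
      exact zero_mem _
  | succ k ih =>
      have h2 : Finsupp.single (σ ^ k • x) c - Finsupp.single (σ ^ (k+1) • x) c
          ∈ (oneSubMap G (X →₀ ℤ) σ).range := by
        refine ⟨Finsupp.single (σ ^ k • x) c, ?_⟩
        rw [oneSubMap_single, pow_succ', mul_smul]
      simpa using add_mem ih h2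

lemma single_sub_single_mem (σ : G) (hgen : ∀ τ : G, τ ∈ Subgroup.zpowers σ)
    (x : X) (c : ℤ) (τ : G) :
    Finsupp.single x c - Finsupp.single (τ • x) c
      ∈ (oneSubMap G (X →₀ ℤ) σ).range := by
  obtain ⟨n, hn⟩ := hgen τ
  have hn' : σ ^ n = τ := hn
  rcases n.eq_nat_or_neg with ⟨m, hm | hm⟩
  · have : τ • x = σ ^ m • x := by rw [← hn', hm, zpow_natCast]
    rw [this]
    exact single_sub_single_pow_mem σ x c m
  · have hx : σ ^ m • (τ • x) = x := by
      rw [← hn', hm, smul_smul, ← zpow_natCast, ← zpow_add]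
      simp
    have h := neg_mem (single_sub_single_pow_mem σ (τ • x) c m)
    rw [neg_sub, hx] at h
    exact h

lemma filter_mk_eq (q : Quotient (MulAction.orbitRel G X)) [Fintype X] [DecidableEq X]
    [DecidableEq (Quotient (MulAction.orbitRel G X))] :
    Finset.univ.filter (fun x : X => Quotient.mk (MulAction.orbitRel G X) x = q)
      = orbitFinset G q.out := by
  ext x
  simp only [mem_filter, mem_univ, true_and, mem_orbitFinset]
  constructor
  · intro h
    exact MulAction.orbitRel_apply.mp (Quotient.exact (h.trans (Quotient.out_eq q).symm))
  · intro h
    obtain ⟨τ, hτ⟩ := h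
    simp only at hτ
    rw [← hτ, show (Quotient.mk (MulAction.orbitRel G X) (τ • q.out)) = ⟦q.out⟧ from
      Quotient.sound (MulAction.orbitRel_apply.mpr (MulAction.mem_orbit _ _)), Quotient.out_eq]

lemma ker_norm_le_range (σ : G) (hgen : ∀ τ : G, τ ∈ Subgroup.zpowers σ) :
    (normMap G (X →₀ ℤ)).ker ≤ (oneSubMap G (X →₀ ℤ) σ).range := by
  classical
  haveI := Fintype.ofFinite X
  intro f hf
  rw [AddMonoidHom.mem_ker] at hf
  have hdecomp : f = ∑ x : X, Finsupp.single x (f x) := by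
    ext y
    rw [Finsupp.finset_sum_apply]
    simp [Finsupp.single_apply]
  have hzero : ∑ x : X,
      Finsupp.single ((Quotient.mk (MulAction.orbitRel G X) x).out) (f x) = 0 := by
    rw [← Finset.sum_fiberwise univ (fun x : X => Quotient.mk (MulAction.orbitRel G X) x)
      (fun x => Finsupp.single ((Quotient.mk (MulAction.orbitRel G X) x).out) (f x))]
    refine Finset.sum_eq_zero fun q _ => ?_
    have hc : ∀ x ∈ univ.filter (fun x : X => Quotient.mk (MulAction.orbitRel G X) x = q),
        Finsupp.single ((Quotient.mk (MulAction.orbitRel G X) x).out) (f x)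
          = Finsupp.singleAddHom q.out (f x) := fun x hx => by
      rw [(Finset.mem_filter.mp hx).2]; rfl
    rw [Finset.sum_congr rfl hc, ← map_sum (Finsupp.singleAddHom q.out) _ _, filter_mk_eq,
      orbit_sum_zero hf q.out]
    simp
  have key : f = ∑ x : X, (Finsupp.single x (f x)
      - Finsupp.single ((Quotient.mk (MulAction.orbitRel G X) x).out) (f x)) := by
    rw [Finset.sum_sub_distrib, hzero, sub_zero, ← hdecomp]
  rw [key]
  refine sum_mem fun x _ => ?_
  obtain ⟨τ, hτ⟩ := MulAction.orbitRel_apply.mp (@Quotient.mk_out X (MulAction.orbitRel G X) x)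
  simp only at hτ
  rw [← hτ]
  exact single_sub_single_mem σ hgen x (f x) τ

lemma H1card_eq_one (σ : G) (hgen : ∀ τ : G, τ ∈ Subgroup.zpowers σ) :
    H1card G (X →₀ ℤ) σ = 1 := by
  rw [H1card, AddSubgroup.addSubgroupOf_eq_top.mpr (ker_norm_le_range σ hgen)]
  exact Nat.card_eq_one_iff_unique.mpr
    ⟨QuotientAddGroup.subsingleton_quotient_top, ⟨0⟩⟩

lemma ncard_stabilizer_smul (τ : G) (r : X) :
    Nat.card (MulAction.stabilizer G (τ • r)) = Nat.card (MulAction.stabilizer G r) := by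
  rw [MulAction.stabilizer_smul_eq_stabilizer_map_conj]
  exact (Nat.card_congr ((MulAction.stabilizer G r).equivMapOfInjective _
    (MulAut.conj τ).injective).toEquiv).symm

lemma ncard_stabilizer_of_mem_orbit {r y : X} (h : y ∈ MulAction.orbit G r) :
    Nat.card (MulAction.stabilizer G y) = Nat.card (MulAction.stabilizer G r) := by
  obtain ⟨τ, hτ⟩ := h
  simp only at hτ
  rw [← hτ, ncard_stabilizer_smul]

lemma mem_fixedSub_iff (f : X →₀ ℤ) :
    f ∈ fixedSub G (X →₀ ℤ) ↔ ∀ (τ : G) (y : X), f (τ • y) = f y := by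
  constructor
  · intro h τ y
    have h2 := DFunLike.congr_fun (h τ⁻¹) y
    rw [Finsupp.comapSMul_apply] at h2
    simpa using h2
  · intro h τ
    ext y
    rw [Finsupp.comapSMul_apply, ← h τ⁻¹ y]

variable (G X) in
/-- The evaluation-at-orbit-representatives map. -/
noncomputable def phi : fixedSub G (X →₀ ℤ) →+
    ((q : Quotient (MulAction.orbitRel G X)) → ZMod (Nat.card (MulAction.stabilizer G q.out))) where
  toFun f := fun q => (((f : X →₀ ℤ) q.out : ℤ) : ZMod (Nat.card (MulAction.stabilizer G q.out)))
  map_zero' := by ext q; simp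
  map_add' f g := by ext q; simp [Finsupp.add_apply]

lemma phi_surjective : Function.Surjective (phi G X) := by
  classical
  haveI := Fintype.ofFinite X
  intro c
  set f : X →₀ ℤ := Finsupp.equivFunOnFinite.symm
    (fun y => ((c (Quotient.mk (MulAction.orbitRel G X) y)).val : ℤ)) with hf
  have hfy : ∀ y : X, f y = ((c (Quotient.mk (MulAction.orbitRel G X) y)).val : ℤ) :=
    fun y => rfl
  have hfix : f ∈ fixedSub G (X →₀ ℤ) := by
    rw [mem_fixedSub_iff]
    intro τ y
    rw [hfy, hfy]
    have he : (Quotient.mk (MulAction.orbitRel G X) (τ • y))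
        = Quotient.mk (MulAction.orbitRel G X) y :=
      Quotient.sound (MulAction.orbitRel_apply.mpr (MulAction.mem_orbit y τ))
    rw [he]
  refine ⟨⟨f, hfix⟩, ?_⟩
  ext q
  show (((f : X →₀ ℤ) q.out : ℤ) : ZMod _) = c q
  haveI : NeZero (Nat.card (MulAction.stabilizer G q.out)) := ⟨Nat.card_pos.ne'⟩
  rw [hfy, Quotient.out_eq, Int.cast_natCast]
  exact ZMod.natCast_rightInverse (c q)

lemma phi_ker :
    (phi G X).ker = (normMap G (X →₀ ℤ)).range.addSubgroupOf (fixedSub G (X →₀ ℤ)) := by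
  classical
  haveI := Fintype.ofFinite X
  ext f
  rw [AddMonoidHom.mem_ker, AddSubgroup.mem_addSubgroupOf]
  constructor
  · intro h
    have hdvd : ∀ q : Quotient (MulAction.orbitRel G X),
        ((Nat.card (MulAction.stabilizer G q.out)) : ℤ) ∣ (f : X →₀ ℤ) q.out := by
      intro q
      have h2 : (((f : X →₀ ℤ) q.out : ℤ)
          : ZMod (Nat.card (MulAction.stabilizer G q.out))) = 0 := congr_fun h q
      rw [ZMod.intCast_zmod_eq_zero_iff_dvd] at h2
      exact h2
    choose c hc using hdvd
    set g : X →₀ ℤ := Finsupp.equivFunOnFinite.symm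
      (fun y => if y = (Quotient.mk (MulAction.orbitRel G X) y).out
        then c (Quotient.mk (MulAction.orbitRel G X) y) else 0) with hg
    refine ⟨g, ?_⟩
    ext y
    rw [normMap_apply, sum_smul_eq y (fun x => g x)]
    set q := Quotient.mk (MulAction.orbitRel G X) y with hq
    have houty : q.out ∈ MulAction.orbit G y :=
      MulAction.orbitRel_apply.mp (@Quotient.mk_out X (MulAction.orbitRel G X) y)
    have hsum : ∑ x ∈ orbitFinset G y, g x = c q := by
      rw [Finset.sum_eq_single q.out]
      · show (if q.out = (Quotient.mk (MulAction.orbitRel G X) q.out).out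
          then c (Quotient.mk (MulAction.orbitRel G X) q.out) else 0) = c q
        rw [Quotient.out_eq]
        simp
      · intro x hx hxne
        rw [mem_orbitFinset] at hx
        have hxq : Quotient.mk (MulAction.orbitRel G X) x = q :=
          Quotient.sound (MulAction.orbitRel_apply.mpr hx)
        show (if x = (Quotient.mk (MulAction.orbitRel G X) x).out
          then c (Quotient.mk (MulAction.orbitRel G X) x) else 0) = 0
        rw [hxq, if_neg hxne]
      · intro hmem
        exact absurd (mem_orbitFinset.mpr houty) hmem
    have hfy : (f : X →₀ ℤ) y = (f : X →₀ ℤ) q.out := by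
      obtain ⟨τ, hτ⟩ := houty
      simp only at hτ
      rw [← hτ, (mem_fixedSub_iff _).mp f.2]
    rw [hsum, ← ncard_stabilizer_of_mem_orbit houty, hfy, hc q, nsmul_eq_mul]
  · rintro ⟨g, hgf⟩
    ext q
    show (((f : X →₀ ℤ) q.out : ℤ)
        : ZMod (Nat.card (MulAction.stabilizer G q.out))) = 0
    rw [ZMod.intCast_zmod_eq_zero_iff_dvd, ← hgf, normMap_apply,
      sum_smul_eq q.out (fun x => g x), nsmul_eq_mul]
    exact Dvd.intro _ rfl

lemma H0card_eq :
    H0card G (X →₀ ℤ) = ∏ᶠ q : Quotient (MulAction.orbitRel G X),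
      Nat.card (MulAction.stabilizer G q.out) := by
  classical
  haveI := Fintype.ofFinite X
  haveI := Fintype.ofFinite (Quotient (MulAction.orbitRel G X))
  rw [H0card, ← phi_ker,
    Nat.card_congr (QuotientAddGroup.quotientKerEquivOfSurjective _ phi_surjective).toEquiv,
    Nat.card_pi, finprod_eq_prod_of_fintype]
  exact Finset.prod_congr rfl fun q _ => Nat.card_zmod _

end Aux

/-- Let `G` be a finite cyclic group (generator `σ`), `X` a finite `G`-set and
`A = ⊕_{x ∈ X} ℤx` the permutation `G`-module on `X`.  Then
`h(G, A) = ∏_{x ∈ X/G} #G_x`. -/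
theorem herbrand_permutation_module_eq_prod_card_stabilizer
    (σ : G) (hgen : ∀ τ : G, τ ∈ Subgroup.zpowers σ)
    (X : Type*) [Finite X] [MulAction G X] :
    herbrand G (X →₀ ℤ) σ =
      (∏ᶠ q : Quotient (MulAction.orbitRel G X),
        Nat.card (MulAction.stabilizer G q.out) : ℕ) := by
  rw [herbrand, H1card_eq_one σ hgen, H0card_eq]
  simp
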